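/- For all real parameters λ > 0 with λ ≠ 1 and φ > 1, and every real t, the moment generating function of the SMPtW distribution satisfies ∫₀^∞ exp(t·y) · ((log λ) φ y^(φ−1) exp((log λ)·exp(−y^φ) − y^φ))/(λ − 1) dy = Σ_{r=0}^∞ (t^r / r!) · ((log λ)/(λ − 1)) · Γ(r/φ + 1) · Σ_{j=0}^∞ (log λ)^j / (j! · (j + 1)^(r/φ + 1)), with both the integral and the iterated series converging. -/

import Mathlib

open Real MeasureTheory

/-- The SMPtW probability density function with parameters `lam > 0`, `lam ≠ 1`, `phi > 0`. -/
noncomputable def smptwPDF (lam phi y : ℝ) : ℝ :=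
  (Real.log lam * phi * y ^ (phi - 1) *
    Real.exp (Real.log lam * Real.exp (-(y ^ phi)) - y ^ phi)) / (lam - 1)

/-- The "core" of the SMPtW pdf, without the constant factor. -/
noncomputable def smptwCore (lam phi y : ℝ) : ℝ :=
  phi * y ^ (phi - 1) * Real.exp (Real.log lam * Real.exp (-(y ^ phi)) - y ^ phi)

lemma smptwPDF_eq (lam phi y : ℝ) :
    smptwPDF lam phi y = (Real.log lam / (lam - 1)) * smptwCore lam phi y := by
  unfold smptwPDF smptwCore; ring

lemma smptwCore_meas (lam phi : ℝ) : Measurable (smptwCore lam phi) := by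
  unfold smptwCore; fun_prop

lemma smptwPDF_meas (lam phi : ℝ) : Measurable (smptwPDF lam phi) := by
  unfold smptwPDF; fun_prop

lemma smptwCore_nonneg (lam phi : ℝ) (hphi : 0 < phi) {y : ℝ} (hy : 0 < y) :
    0 ≤ smptwCore lam phi y := by
  unfold smptwCore; positivity

lemma smptw_K_pos {lam : ℝ} (hlam : 0 < lam) (hlam1 : lam ≠ 1) :
    0 < Real.log lam / (lam - 1) := by
  rcases lt_or_gt_of_ne hlam1 with h | h
  · have h1 : Real.log lam < 0 := Real.log_neg hlam h
    have h2 : lam - 1 < 0 := by linarith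
    exact div_pos_of_neg_of_neg h1 h2
  · exact div_pos (Real.log_pos h) (by linarith)

lemma real_exp_eq_tsum (x : ℝ) :
    Real.exp x = ∑' n : ℕ, x ^ n / (n.factorial : ℝ) := by
  rw [Real.exp_eq_exp_ℝ, NormedSpace.exp_eq_tsum_div]

lemma exp_mul_exp_neg_eq_tsum (L u : ℝ) :
    Real.exp (L * Real.exp (-u)) =
      ∑' j : ℕ, L ^ j / (j.factorial : ℝ) * Real.exp (-(j : ℝ) * u) := by
  rw [real_exp_eq_tsum (L * Real.exp (-u))]
  refine tsum_congr fun j => ?_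
  rw [mul_pow, ← Real.exp_nat_mul, show (j : ℝ) * -u = -(j : ℝ) * u by ring]
  ring

/-- linear growth is eventually dominated by `y ^ p / 2`. -/
lemma smptw_linear_le (c p : ℝ) (hp : 1 < p) :
    ∃ M : ℝ, 0 ≤ M ∧ ∀ y : ℝ, 0 < y → c * y ≤ M + (1 / 2) * y ^ p := by
  set R : ℝ := max 1 ((2 * |c|) ^ (1 / (p - 1))) with hR
  have hR1 : 1 ≤ R := le_max_left _ _
  refine ⟨|c| * R, by positivity, fun y hy => ?_⟩
  rcases le_total y R with h | h
  · have h1 : c * y ≤ |c| * R := by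
      calc c * y ≤ |c| * y := mul_le_mul_of_nonneg_right (le_abs_self c) hy.le
        _ ≤ |c| * R := mul_le_mul_of_nonneg_left h (abs_nonneg c)
    have h2 : (0 : ℝ) ≤ (1 / 2) * y ^ p := by positivity
    linarith
  · have hyR : (2 * |c|) ^ (1 / (p - 1)) ≤ y := le_trans (le_max_right _ _) h
    have hy1 : 1 ≤ y := le_trans hR1 h
    have hp1 : (0 : ℝ) < p - 1 := by linarith
    have key : 2 * |c| ≤ y ^ (p - 1) := by
      have h0 : (0 : ℝ) ≤ 2 * |c| := by positivity
      calc 2 * |c| = ((2 * |c|) ^ (1 / (p - 1))) ^ (p - 1) := by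
            rw [one_div, Real.rpow_inv_rpow h0 (ne_of_gt hp1)]
        _ ≤ y ^ (p - 1) := Real.rpow_le_rpow (Real.rpow_nonneg h0 _) hyR hp1.le
    have hmain : c * y ≤ (1 / 2) * y ^ p := by
      have hyp : y ^ (p - 1) * y = y ^ p := by
        rw [← Real.rpow_add_one (ne_of_gt hy) (p - 1)]; ring_nf
      calc c * y ≤ |c| * y := mul_le_mul_of_nonneg_right (le_abs_self c) hy.le
        _ = (1 / 2) * ((2 * |c|) * y) := by ring
        _ ≤ (1 / 2) * (y ^ (p - 1) * y) := by
            apply mul_le_mul_of_nonneg_left (mul_le_mul_of_nonneg_right key hy.le) (by norm_num)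
        _ = (1 / 2) * y ^ p := by rw [hyp]
    have : (0 : ℝ) ≤ |c| * R := by positivity
    linarith

/-- Integrability of `exp (c y) * core` on `(0, ∞)`. -/
lemma smptw_integrable_exp_mul (lam phi : ℝ) (hphi : 1 < phi) (c : ℝ) :
    IntegrableOn (fun y : ℝ => Real.exp (c * y) * smptwCore lam phi y)
      (Set.Ioi (0 : ℝ)) := by
  obtain ⟨M, hM0, hM⟩ := smptw_linear_le c phi hphi
  have hphi0 : (0 : ℝ) < phi := by linarith
  set L := Real.log lam with hL
  have hmaj : IntegrableOn
      (fun y : ℝ => (Real.exp (M + |L|) * phi) * (y ^ (phi - 1) * Real.exp (-(1/2) * y ^ phi)))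
      (Set.Ioi (0 : ℝ)) :=
    (integrableOn_rpow_mul_exp_neg_mul_rpow (by linarith) hphi0 (by norm_num)).const_mul _
  refine Integrable.mono' hmaj ?_ ?_
  · exact (Measurable.aestronglyMeasurable (by fun_prop)).mul
      (smptwCore_meas lam phi).aestronglyMeasurable
  · filter_upwards [ae_restrict_mem measurableSet_Ioi] with y hy
    have hy0 : (0 : ℝ) < y := hy
    have hY : (0 : ℝ) ≤ y ^ phi := Real.rpow_nonneg hy0.le phi
    have h1 : L * Real.exp (-(y ^ phi)) ≤ |L| := by
      calc L * Real.exp (-(y ^ phi)) ≤ |L| * Real.exp (-(y ^ phi)) :=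
            mul_le_mul_of_nonneg_right (le_abs_self L) (Real.exp_nonneg _)
        _ ≤ |L| * 1 := mul_le_mul_of_nonneg_left
            (Real.exp_le_one_iff.mpr (by linarith)) (abs_nonneg L)
        _ = |L| := mul_one _
    have h2 : c * y + (L * Real.exp (-(y ^ phi)) - y ^ phi)
        ≤ (M + |L|) + (-(1/2) * y ^ phi) := by
      have := hM y hy0
      linarith
    have h3 : Real.exp (c * y) * Real.exp (L * Real.exp (-(y ^ phi)) - y ^ phi)
        ≤ Real.exp (M + |L|) * Real.exp (-(1/2) * y ^ phi) := by
      rw [← Real.exp_add, ← Real.exp_add]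
      exact Real.exp_le_exp.mpr h2
    have hcore : 0 ≤ y ^ (phi - 1) := Real.rpow_nonneg hy0.le _
    have hnorm : ‖Real.exp (c * y) * smptwCore lam phi y‖
        = Real.exp (c * y) * smptwCore lam phi y := by
      rw [Real.norm_eq_abs, abs_of_nonneg]
      unfold smptwCore
      positivity
    rw [hnorm]
    unfold smptwCore
    calc Real.exp (c * y) * (phi * y ^ (phi - 1) * Real.exp (L * Real.exp (-(y ^ phi)) - y ^ phi))
        = (phi * y ^ (phi - 1)) *
            (Real.exp (c * y) * Real.exp (L * Real.exp (-(y ^ phi)) - y ^ phi)) := by ring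
      _ ≤ (phi * y ^ (phi - 1)) * (Real.exp (M + |L|) * Real.exp (-(1/2) * y ^ phi)) :=
          mul_le_mul_of_nonneg_left h3 (by positivity)
      _ = Real.exp (M + |L|) * phi * (y ^ (phi - 1) * Real.exp (-(1/2) * y ^ phi)) := by ring

/-- the Gamma-type integral. -/
lemma smptw_integral_g (phi : ℝ) (hphi : 1 < phi) (r j : ℕ) :
    ∫ y in Set.Ioi (0 : ℝ), y ^ ((r : ℝ) + phi - 1) * Real.exp (-((j : ℝ) + 1) * y ^ phi)
      = ((j : ℝ) + 1) ^ (-((r : ℝ) / phi + 1)) * (1 / phi) *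
          Real.Gamma ((r : ℝ) / phi + 1) := by
  have hphi0 : (0 : ℝ) < phi := by linarith
  have hr : (0:ℝ) ≤ (r:ℝ) := Nat.cast_nonneg r
  have h := integral_rpow_mul_exp_neg_mul_rpow (p := phi) (q := (r : ℝ) + phi - 1)
    (b := (j : ℝ) + 1) hphi0 (by linarith) (by positivity)
  rw [h, show ((r : ℝ) + phi - 1 + 1) / phi = (r : ℝ) / phi + 1 by field_simp; ring,
    show -((r : ℝ) + phi - 1 + 1) / phi = -((r : ℝ) / phi + 1) by field_simp; ring]

/-- summability of the inner series. -/
lemma smptw_inner_summable (L phi : ℝ) (hphi : 1 < phi) (r : ℕ) :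
    Summable (fun j : ℕ =>
      L ^ j / ((j.factorial : ℝ) * ((j : ℝ) + 1) ^ ((r : ℝ) / phi + 1))) := by
  have hs : (0:ℝ) ≤ (r : ℝ) / phi + 1 := by positivity
  refine Summable.of_norm ?_
  refine Summable.of_nonneg_of_le (fun j => norm_nonneg _) (fun j => ?_)
    ((Real.summable_pow_div_factorial |L|))
  have h1 : (1:ℝ) ≤ ((j : ℝ) + 1) ^ ((r : ℝ) / phi + 1) :=
    Real.one_le_rpow (by exact_mod_cast Nat.succ_le_succ (Nat.zero_le j)) hs
  have hf1 : (1:ℝ) ≤ (j.factorial : ℝ) := by exact_mod_cast j.factorial_pos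
  rw [norm_div, norm_pow, Real.norm_eq_abs, Real.norm_eq_abs]
  rw [abs_of_nonneg (by positivity : (0:ℝ) ≤ (j.factorial : ℝ) * ((j : ℝ) + 1) ^ ((r : ℝ) / phi + 1))]
  apply div_le_div₀ (by positivity) le_rfl (by positivity)
  calc (j.factorial : ℝ) = (j.factorial : ℝ) * 1 := by ring
    _ ≤ (j.factorial : ℝ) * ((j : ℝ) + 1) ^ ((r : ℝ) / phi + 1) :=
      mul_le_mul_of_nonneg_left h1 (by positivity)

/-- the inner swap : moments of the core. -/
lemma smptw_inner (lam phi : ℝ) (hlam : 0 < lam) (hphi : 1 < phi) (r : ℕ) :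
    ∫ y in Set.Ioi (0 : ℝ), y ^ ((r : ℝ)) * smptwCore lam phi y
      = Real.Gamma ((r : ℝ) / phi + 1) *
          ∑' j : ℕ, (Real.log lam) ^ j /
            ((j.factorial : ℝ) * ((j : ℝ) + 1) ^ ((r : ℝ) / phi + 1)) := by
  have hphi0 : (0 : ℝ) < phi := by linarith
  have hr0 : (0 : ℝ) ≤ (r : ℝ) := Nat.cast_nonneg r
  set L := Real.log lam with hL
  set s : ℝ := (r : ℝ) / phi + 1 with hs
  have hs1 : (1 : ℝ) ≤ s := by
    rw [hs]
    have : (0:ℝ) ≤ (r:ℝ) / phi := by positivity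
    linarith
  have hΓ : 0 < Real.Gamma s := Real.Gamma_pos_of_pos (by linarith)
  set g : ℕ → ℝ → ℝ := fun j y =>
    (L ^ j / (j.factorial : ℝ) * phi) *
      (y ^ ((r : ℝ) + phi - 1) * Real.exp (-((j : ℝ) + 1) * y ^ phi)) with hgdef
  have hgint : ∀ j, IntegrableOn (g j) (Set.Ioi (0 : ℝ)) := fun j =>
    (integrableOn_rpow_mul_exp_neg_mul_rpow (by linarith) hphi0
      (by positivity)).const_mul _
  -- pointwise expansion
  have hpt : Set.EqOn (fun y : ℝ => y ^ ((r : ℝ)) * smptwCore lam phi y)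
      (fun y : ℝ => ∑' j : ℕ, g j y) (Set.Ioi 0) := by
    intro y hy
    have hy0 : (0 : ℝ) < y := hy
    simp only [smptwCore]
    have e1 : Real.exp (L * Real.exp (-(y ^ phi)) - y ^ phi)
        = Real.exp (L * Real.exp (-(y ^ phi))) * Real.exp (-(y ^ phi)) := by
      rw [Real.exp_sub, Real.exp_neg]; ring
    rw [e1, exp_mul_exp_neg_eq_tsum L (y ^ phi)]
    have e2 : y ^ ((r:ℝ)) * (phi * y ^ (phi - 1) *
        ((∑' j : ℕ, L ^ j / (j.factorial : ℝ) * Real.exp (-(j : ℝ) * y ^ phi)) *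
          Real.exp (-(y ^ phi))))
        = (∑' j : ℕ, L ^ j / (j.factorial : ℝ) * Real.exp (-(j : ℝ) * y ^ phi)) *
            (y ^ ((r:ℝ)) * phi * y ^ (phi - 1) * Real.exp (-(y ^ phi))) := by ring
    rw [e2, ← tsum_mul_right]
    refine tsum_congr fun j => ?_
    simp only [hgdef]
    rw [show (r : ℝ) + phi - 1 = (r : ℝ) + (phi - 1) by ring, Real.rpow_add hy0,
      show -((j : ℝ) + 1) * y ^ phi = -(j : ℝ) * y ^ phi + -(y ^ phi) by ring,
      Real.exp_add]
    ring
  -- value of each integral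
  have hgval : ∀ j : ℕ, ∫ y in Set.Ioi (0 : ℝ), g j y
      = Real.Gamma s * (L ^ j / ((j.factorial : ℝ) * ((j : ℝ) + 1) ^ s)) := by
    intro j
    simp only [hgdef]
    rw [integral_const_mul, smptw_integral_g phi hphi r j, ← hs]
    have hj1 : (0 : ℝ) < (j : ℝ) + 1 := by positivity
    rw [Real.rpow_neg hj1.le]
    have h1 : (j.factorial : ℝ) ≠ 0 := by exact_mod_cast j.factorial_ne_zero
    have h2 : ((j : ℝ) + 1) ^ s ≠ 0 := (Real.rpow_pos_of_pos hj1 s).ne'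
    clear_value s
    field_simp
  -- lintegral bound
  have hub : ∀ j : ℕ, (∫⁻ y in Set.Ioi (0 : ℝ), ‖g j y‖₊)
      ≤ ENNReal.ofReal (|L| ^ j / (j.factorial : ℝ) * Real.Gamma s) := by
    intro j
    have hInt : Integrable (g j) (volume.restrict (Set.Ioi (0:ℝ))) := hgint j
    rw [show (∫⁻ y in Set.Ioi (0:ℝ), (‖g j y‖₊ : ENNReal)) = ∫⁻ y in Set.Ioi (0:ℝ), ‖g j y‖ₑ from rfl,
      ← ofReal_integral_norm_eq_lintegral_enorm hInt]
    apply ENNReal.ofReal_le_ofReal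
    have hval : ∫ y in Set.Ioi (0 : ℝ), ‖g j y‖
        = |L ^ j / (j.factorial : ℝ) * phi| *
            (((j : ℝ) + 1) ^ (-s) * (1 / phi) * Real.Gamma s) := by
      have : Set.EqOn (fun y : ℝ => ‖g j y‖)
          (fun y : ℝ => |L ^ j / (j.factorial : ℝ) * phi| *
            (y ^ ((r : ℝ) + phi - 1) * Real.exp (-((j : ℝ) + 1) * y ^ phi)))
          (Set.Ioi 0) := by
        intro y hy
        have hy0 : (0 : ℝ) < y := hy
        simp only [hgdef]
        rw [Real.norm_eq_abs, abs_mul, abs_of_nonneg (by positivity :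
          (0:ℝ) ≤ y ^ ((r : ℝ) + phi - 1) * Real.exp (-((j : ℝ) + 1) * y ^ phi))]
      rw [setIntegral_congr_fun measurableSet_Ioi this,
        integral_const_mul, smptw_integral_g phi hphi r j]
    rw [hval]
    have habs : |L ^ j / (j.factorial : ℝ) * phi| = |L| ^ j / (j.factorial : ℝ) * phi := by
      rw [abs_mul, abs_div, abs_pow, abs_of_pos hphi0,
        abs_of_nonneg (by positivity : (0:ℝ) ≤ (j.factorial : ℝ))]
    rw [habs]
    have hle1 : ((j : ℝ) + 1) ^ (-s) ≤ 1 :=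
      Real.rpow_le_one_of_one_le_of_nonpos (by exact_mod_cast Nat.succ_le_succ (Nat.zero_le j))
        (by linarith)
    have e3 : |L| ^ j / (j.factorial : ℝ) * phi *
        (((j : ℝ) + 1) ^ (-s) * (1 / phi) * Real.Gamma s)
        = (|L| ^ j / (j.factorial : ℝ) * Real.Gamma s) * ((j : ℝ) + 1) ^ (-s) := by
      field_simp
    rw [e3]
    exact mul_le_of_le_one_right (by positivity) hle1
  -- put things together
  rw [setIntegral_congr_fun measurableSet_Ioi hpt,
    MeasureTheory.integral_tsum (fun j => (hgint j).1) ?_]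
  · rw [tsum_congr hgval, tsum_mul_left]
  · have heq : ∑' j : ℕ, ENNReal.ofReal (|L| ^ j / (j.factorial : ℝ) * Real.Gamma s)
        = ENNReal.ofReal (∑' j : ℕ, |L| ^ j / (j.factorial : ℝ) * Real.Gamma s) :=
      (ENNReal.ofReal_tsum_of_nonneg (fun j => by positivity)
        ((Real.summable_pow_div_factorial |L|).mul_right _)).symm
    exact ne_top_of_le_ne_top (by rw [heq]; exact ENNReal.ofReal_ne_top)
      (ENNReal.tsum_le_tsum hub)

/-- the moment generating function of the SMPtW distribution,
with convergence of the integral and of the iterated series. -/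
theorem smptw_mgf (lam phi : ℝ)
    (hlam : 0 < lam) (hlam1 : lam ≠ 1) (hphi : 1 < phi) (t : ℝ) :
    IntegrableOn (fun y : ℝ => Real.exp (t * y) * smptwPDF lam phi y)
      (Set.Ioi (0 : ℝ)) ∧
    (∀ r : ℕ, Summable (fun j : ℕ =>
      (Real.log lam) ^ j /
        ((j.factorial : ℝ) * ((j : ℝ) + 1) ^ ((r : ℝ) / phi + 1)))) ∧
    Summable (fun r : ℕ =>
      (t ^ r / (r.factorial : ℝ)) * (Real.log lam / (lam - 1)) *
        Real.Gamma ((r : ℝ) / phi + 1) *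
        ∑' j : ℕ, (Real.log lam) ^ j /
          ((j.factorial : ℝ) * ((j : ℝ) + 1) ^ ((r : ℝ) / phi + 1))) ∧
    ∫ y in Set.Ioi (0 : ℝ), Real.exp (t * y) * smptwPDF lam phi y =
      ∑' r : ℕ,
        (t ^ r / (r.factorial : ℝ)) * (Real.log lam / (lam - 1)) *
          Real.Gamma ((r : ℝ) / phi + 1) *
          ∑' j : ℕ, (Real.log lam) ^ j /
            ((j.factorial : ℝ) * ((j : ℝ) + 1) ^ ((r : ℝ) / phi + 1)) := by
  have hphi0 : (0 : ℝ) < phi := by linarith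
  have hK : 0 < Real.log lam / (lam - 1) := smptw_K_pos hlam hlam1
  -- the summands of the mgf expansion
  set F : ℕ → ℝ → ℝ := fun r y =>
    (t * y) ^ r / (r.factorial : ℝ) * smptwPDF lam phi y with hFdef
  have hFmeas : ∀ r : ℕ, AEStronglyMeasurable (F r) (volume.restrict (Set.Ioi (0:ℝ))) := by
    intro r
    exact (((measurable_const.mul measurable_id).pow_const r).div_const _ |>.mul
      (smptwPDF_meas lam phi)).aestronglyMeasurable
  -- value of each term integral
  have hFval : ∀ r : ℕ, ∫ y in Set.Ioi (0:ℝ), F r y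
      = (t ^ r / (r.factorial : ℝ)) * (Real.log lam / (lam - 1)) *
          Real.Gamma ((r : ℝ) / phi + 1) *
          ∑' j : ℕ, (Real.log lam) ^ j /
            ((j.factorial : ℝ) * ((j : ℝ) + 1) ^ ((r : ℝ) / phi + 1)) := by
    intro r
    have e1 : Set.EqOn (F r)
        (fun y : ℝ => (t ^ r / (r.factorial : ℝ) * (Real.log lam / (lam - 1))) *
          (y ^ ((r : ℝ)) * smptwCore lam phi y)) (Set.Ioi 0) := by
      intro y hy
      simp only [hFdef]
      rw [smptwPDF_eq, mul_pow, Real.rpow_natCast]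
      ring
    rw [setIntegral_congr_fun measurableSet_Ioi e1, integral_const_mul,
      smptw_inner lam phi hlam hphi r]
    ring
  -- the ENNReal bound
  have hT : ∑' r : ℕ, ∫⁻ y in Set.Ioi (0:ℝ), ‖F r y‖₊ ≠ ⊤ := by
    have hswap : ∑' r : ℕ, ∫⁻ y in Set.Ioi (0:ℝ), ‖F r y‖₊
        = ∫⁻ y in Set.Ioi (0:ℝ), ∑' r : ℕ, (‖F r y‖₊ : ENNReal) :=
      (lintegral_tsum fun r => (hFmeas r).aemeasurable.nnnorm.coe_nnreal_ennreal).symm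
    have hpt2 : ∀ y ∈ Set.Ioi (0:ℝ), (∑' r : ℕ, (‖F r y‖₊ : ENNReal))
        = ENNReal.ofReal ((Real.log lam / (lam - 1)) *
            (Real.exp (|t| * y) * smptwCore lam phi y)) := by
      intro y hy
      have hy0 : (0 : ℝ) < y := hy
      have hcore := smptwCore_nonneg lam phi hphi0 hy0
      have habs : ∀ r : ℕ, ‖F r y‖ = |t * y| ^ r / (r.factorial : ℝ) *
          ((Real.log lam / (lam - 1)) * smptwCore lam phi y) := by
        intro r
        simp only [hFdef]
        rw [norm_mul, Real.norm_eq_abs, Real.norm_eq_abs, abs_div, abs_pow,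
          Nat.abs_cast, smptwPDF_eq, abs_of_nonneg (mul_nonneg hK.le hcore)]
      have hsum : Summable fun r : ℕ => |t * y| ^ r / (r.factorial : ℝ) *
          ((Real.log lam / (lam - 1)) * smptwCore lam phi y) :=
        (Real.summable_pow_div_factorial _).mul_right _
      calc (∑' r : ℕ, (‖F r y‖₊ : ENNReal)) = ∑' r : ℕ, ENNReal.ofReal ‖F r y‖ := 
            tsum_congr fun r => (ofReal_norm _).symm
        _ = ENNReal.ofReal (∑' r : ℕ, ‖F r y‖) :=
            (ENNReal.ofReal_tsum_of_nonneg (fun r => norm_nonneg _)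
              (hsum.congr fun r => (habs r).symm)).symm
        _ = _ := by
            congr 1
            calc ∑' r : ℕ, ‖F r y‖
                = ∑' r : ℕ, |t * y| ^ r / (r.factorial : ℝ) *
                    ((Real.log lam / (lam - 1)) * smptwCore lam phi y) :=
                  tsum_congr habs
              _ = (∑' r : ℕ, |t * y| ^ r / (r.factorial : ℝ)) *
                    ((Real.log lam / (lam - 1)) * smptwCore lam phi y) := tsum_mul_right
              _ = Real.exp |t * y| *
                    ((Real.log lam / (lam - 1)) * smptwCore lam phi y) := by
                  rw [← real_exp_eq_tsum]
              _ = (Real.log lam / (lam - 1)) *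
                    (Real.exp (|t| * y) * smptwCore lam phi y) := by
                  rw [abs_mul, abs_of_pos hy0]; ring
    have hInt2 : Integrable (fun y : ℝ => (Real.log lam / (lam - 1)) *
        (Real.exp (|t| * y) * smptwCore lam phi y)) (volume.restrict (Set.Ioi (0:ℝ))) :=
      (smptw_integrable_exp_mul lam phi hphi |t|).const_mul _
    have hnn : 0 ≤ᵐ[volume.restrict (Set.Ioi (0:ℝ))] fun y : ℝ =>
        (Real.log lam / (lam - 1)) * (Real.exp (|t| * y) * smptwCore lam phi y) := by
      filter_upwards [ae_restrict_mem measurableSet_Ioi] with y hy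
      exact mul_nonneg hK.le (mul_nonneg (Real.exp_nonneg _)
        (smptwCore_nonneg lam phi hphi0 hy))
    rw [hswap, setLIntegral_congr_fun measurableSet_Ioi hpt2,
      ← ofReal_integral_eq_lintegral_ofReal hInt2 hnn]
    exact ENNReal.ofReal_ne_top
  refine ⟨?_, ?_, ?_, ?_⟩
  · -- integrability
    exact ((smptw_integrable_exp_mul lam phi hphi t).const_mul
      (Real.log lam / (lam - 1))).congr
      (Filter.Eventually.of_forall fun y => by simp only [smptwPDF_eq]; ring)
  · exact fun r => smptw_inner_summable (Real.log lam) phi hphi r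
  · -- summability of the outer series
    have hTsum : Summable (fun r : ℕ => (∫⁻ y in Set.Ioi (0:ℝ), ‖F r y‖₊).toReal) :=
      ENNReal.summable_toReal hT
    refine Summable.of_norm_bounded hTsum fun r => ?_
    rw [← hFval r]
    calc ‖∫ y in Set.Ioi (0:ℝ), F r y‖
        ≤ (∫⁻ y in Set.Ioi (0:ℝ), ENNReal.ofReal ‖F r y‖).toReal :=
          norm_integral_le_lintegral_norm _
      _ = _ := by congr 1; exact lintegral_congr fun y => ofReal_norm _
  · -- the mgf identity
    have hptF : Set.EqOn (fun y : ℝ => Real.exp (t * y) * smptwPDF lam phi y)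
        (fun y : ℝ => ∑' r : ℕ, F r y) (Set.Ioi 0) := by
      intro y _
      simp only [hFdef]
      rw [real_exp_eq_tsum (t * y), ← tsum_mul_right]
    rw [setIntegral_congr_fun measurableSet_Ioi hptF, integral_tsum hFmeas hT]
    exact tsum_congr hFval
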